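/- Let V be a vector space over a field k, let G be an abelian group, and suppose G acts k-linearly on V. If a generating set S of G acts on V via unipotent operators, then every element of G acts on V via a unipotent operator. -/

import Mathlib

/-- If an abelian group `G` acts `k`-linearly on a vector space `V` and a generating set
`S` of `G` acts via unipotent operators (identity plus nilpotent), then every element of
`G` acts via a unipotent operator. -/
theorem unipotent_of_generators (k : Type) [Field k] (V : Type) [AddCommGroup V]
    [Module k V] (G : Type) [CommGroup G] (ρ : G →* (V ≃ₗ[k] V)) (S : Set G)
    (hS : Subgroup.closure S = ⊤)
    (h : ∀ s ∈ S, IsNilpotent (((ρ s).toLinearMap : Module.End k V) - 1)) :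
    ∀ g : G, IsNilpotent (((ρ g).toLinearMap : Module.End k V) - 1) := by
  have hmul : ∀ g h : G, ((ρ (g * h)).toLinearMap : Module.End k V)
      = (ρ g).toLinearMap * (ρ h).toLinearMap := by
    intro g h
    ext x
    simp [Module.End.mul_apply]
  have key : ∀ g h : G, Commute ((ρ g).toLinearMap : Module.End k V) ((ρ h).toLinearMap) := by
    intro g h
    have : ((ρ (g * h)).toLinearMap : Module.End k V) = (ρ (h * g)).toLinearMap := by
      rw [mul_comm]
    rw [hmul, hmul] at this
    exact this
  intro g
  have hg : g ∈ Subgroup.closure S := hS ▸ Subgroup.mem_top g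
  induction hg using Subgroup.closure_induction with
  | mem s hs => exact h s hs
  | one =>
      have : ((ρ 1).toLinearMap : Module.End k V) - 1 = 0 := by simp [sub_eq_zero]; exact Module.End.one_eq_id.symm
      rw [this]; exact IsNilpotent.zero
  | mul a b _ _ ha hb =>
      have hab : ((ρ (a * b)).toLinearMap : Module.End k V) - 1
          = (((ρ a).toLinearMap : Module.End k V) - 1) * (ρ b).toLinearMap
            + (((ρ b).toLinearMap : Module.End k V) - 1) := by
        rw [hmul]; noncomm_ring
      rw [hab]
      have c1 : Commute ((((ρ a).toLinearMap : Module.End k V) - 1) * (ρ b).toLinearMap)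
          (((ρ b).toLinearMap : Module.End k V) - 1) := by
        exact Commute.mul_left (((key a b).sub_left (Commute.one_left _)).sub_right (Commute.one_right _))
          ((Commute.refl _).sub_left (Commute.one_left _)).symm
      refine c1.isNilpotent_add ?_ hb
      exact Commute.isNilpotent_mul_right ((key a b).sub_left (Commute.one_left _)) ha
  | inv a _ ha =>
      have hinv : ((ρ a⁻¹).toLinearMap : Module.End k V) - 1
          = -((ρ a⁻¹).toLinearMap * (((ρ a).toLinearMap : Module.End k V) - 1)) := by
        have : ((ρ a⁻¹).toLinearMap : Module.End k V) * (ρ a).toLinearMap = 1 := by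
          rw [← hmul]; simp; exact Module.End.one_eq_id.symm
        rw [mul_sub, this]; noncomm_ring
      rw [hinv]
      refine (Commute.isNilpotent_mul_left ?_ ha).neg
      exact (key a⁻¹ a).sub_right (Commute.one_right _)
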